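/- Let q > 0, let k be a nonnegative integer, and let p be a real number. Then ∫_0^∞ x^k exp{−px − (1/2) q x²} dx = (−1)^k √(2π/q) · D^k_p [ (1 − Φ(p/√q)) exp{p²/(2q)} ], where D^k_p denotes the k-th derivative with respect to p of the function p ↦ (1 − Φ(p/√q)) exp{p²/(2q)}, evaluated at p. -/

import Mathlib

open MeasureTheory Set

lemma aux_integrable (q : ℝ) (hq : 0 < q) (a : ℝ) (n : ℕ) :
    IntegrableOn (fun x => x ^ n * Real.exp (a * x - q * x ^ 2 / 2)) (Set.Ioi 0) := by
  have h1 : IntegrableOn (fun x : ℝ => x ^ (n : ℝ) * Real.exp (-(q/4) * x ^ 2)) (Set.Ioi 0) :=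
    integrableOn_rpow_mul_exp_neg_mul_sq (by linarith) (by exact lt_of_lt_of_le (by norm_num) (Nat.cast_nonneg n))
  have h2 := (h1.const_mul (Real.exp (a ^ 2 / q)))
  apply Integrable.mono h2
  · exact (Continuous.mul (continuous_pow n) (Real.continuous_exp.comp (by continuity))).aestronglyMeasurable
  · filter_upwards [ae_restrict_mem measurableSet_Ioi] with x hx
    have hx0 : (0:ℝ) < x := hx
    have hre : x ^ (n : ℝ) = x ^ n := Real.rpow_natCast x n
    rw [Real.norm_eq_abs, Real.norm_eq_abs, hre]
    rw [abs_of_nonneg (by positivity), abs_of_nonneg (by positivity)]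
    rw [show Real.exp (a ^ 2 / q) * (x ^ n * Real.exp (-(q/4) * x ^ 2))
        = x ^ n * (Real.exp (a ^ 2 / q) * Real.exp (-(q/4) * x ^ 2)) by ring, ← Real.exp_add]
    gcongr
    nlinarith [sq_nonneg (a - q * x / 2), sq_nonneg x, hq, div_mul_cancel₀ (a ^ 2) hq.ne']

lemma aux_integrable' (q : ℝ) (hq : 0 < q) (p : ℝ) (n : ℕ) :
    IntegrableOn (fun x => (-x) ^ n * Real.exp (-(p * x) - q * x ^ 2 / 2)) (Set.Ioi 0) := by
  have h := (aux_integrable q hq (-p) n).const_mul ((-1 : ℝ) ^ n)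
  apply h.congr
  filter_upwards with x
  rw [show -(p * x) - q * x ^ 2 / 2 = (-p) * x - q * x ^ 2 / 2 by ring]
  ring

lemma aux_hasDeriv (q : ℝ) (hq : 0 < q) (k : ℕ) (p : ℝ) :
    HasDerivAt (fun s => ∫ x in Set.Ioi (0:ℝ), (-x) ^ k * Real.exp (-(s * x) - q * x ^ 2 / 2))
      (∫ x in Set.Ioi (0:ℝ), (-x) ^ (k+1) * Real.exp (-(p * x) - q * x ^ 2 / 2)) p := by
  have main := hasDerivAt_integral_of_dominated_loc_of_deriv_le
    (F := fun s x => (-x) ^ k * Real.exp (-(s * x) - q * x ^ 2 / 2))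
    (F' := fun s x => (-x) ^ (k+1) * Real.exp (-(s * x) - q * x ^ 2 / 2))
    (bound := fun x => x ^ (k+1) * Real.exp ((|p| + 1) * x - q * x ^ 2 / 2))
    (μ := volume.restrict (Set.Ioi 0)) (x₀ := p) (s := Metric.ball p 1) (Metric.ball_mem_nhds p one_pos)
    (Filter.Eventually.of_forall fun s =>
      (Continuous.mul (by continuity) (Real.continuous_exp.comp (by continuity))).aestronglyMeasurable)
    (aux_integrable' q hq p k)
    (Continuous.aestronglyMeasurable
      (Continuous.mul (by continuity) (Real.continuous_exp.comp (by continuity))))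
    ?_ (aux_integrable q hq (|p| + 1) (k+1)) ?_
  · exact main.2
  · filter_upwards [ae_restrict_mem measurableSet_Ioi] with x hx s hs
    have hx0 : (0:ℝ) < x := hx
    have hsp : |s - p| < 1 := by simpa [Real.dist_eq] using hs
    have hns : -s ≤ |p| + 1 := by
      cases' abs_lt.mp hsp with h1 h2
      have := neg_abs_le p
      linarith
    rw [Real.norm_eq_abs, abs_mul, abs_pow, abs_neg, abs_of_pos hx0,
      Real.abs_exp]
    gcongr
    nlinarith [mul_le_mul_of_nonneg_right hns hx0.le]
  · filter_upwards [ae_restrict_mem measurableSet_Ioi] with x hx s hs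
    have h0 : HasDerivAt (fun s : ℝ => -(s * x) - q * x ^ 2 / 2) (-x) s := by
      simpa using ((hasDerivAt_mul_const x).neg.sub_const (q * x ^ 2 / 2) : _)
    have h1 := (h0.exp).const_mul ((-x) ^ k)
    convert h1 using 1
    · rfl
    · ring

lemma aux_iter (q : ℝ) (hq : 0 < q) (c : ℝ) (G : ℝ → ℝ)
    (hG : ∀ s, G s = c * ∫ x in Set.Ioi (0:ℝ), Real.exp (-(s * x) - q * x ^ 2 / 2)) :
    ∀ (k : ℕ) (p : ℝ), iteratedDeriv k G p
      = c * ∫ x in Set.Ioi (0:ℝ), (-x) ^ k * Real.exp (-(p * x) - q * x ^ 2 / 2) := by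
  intro k
  induction k with
  | zero => intro p; simp [hG p]
  | succ k ih =>
    intro p
    rw [iteratedDeriv_succ, funext ih]
    exact (HasDerivAt.const_mul c (aux_hasDeriv q hq k p)).deriv

lemma aux_base (q : ℝ) (hq : 0 < q) (p : ℝ) (Φ : ℝ → ℝ)
    (hΦ : ∀ x, Φ x = (1 / Real.sqrt (2 * Real.pi)) * ∫ v in Set.Iic x, Real.exp (-v ^ 2 / 2)) :
    (1 - Φ (p / Real.sqrt q)) * Real.exp (p ^ 2 / (2 * q))
      = (Real.sqrt (2 * Real.pi / q))⁻¹ * ∫ x in Set.Ioi (0:ℝ),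
          Real.exp (-(p * x) - q * x ^ 2 / 2) := by
  have hsq : 0 < Real.sqrt q := Real.sqrt_pos.mpr hq
  have hq' : Real.sqrt q ^ 2 = q := Real.sq_sqrt hq.le
  have h2pi : (0:ℝ) < Real.sqrt (2 * Real.pi) := Real.sqrt_pos.mpr (by positivity)
  -- step 1 : complete the square
  have key : ∫ x in Set.Ioi (0:ℝ), Real.exp (-(p * x) - q * x ^ 2 / 2)
      = Real.exp (p ^ 2 / (2 * q)) * ∫ x in Set.Ioi (0:ℝ),
          Real.exp (-(Real.sqrt q * x + p / Real.sqrt q) ^ 2 / 2) := by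
    rw [← integral_const_mul]
    apply setIntegral_congr_fun measurableSet_Ioi
    intro x _
    dsimp only
    rw [← Real.exp_add]
    congr 1
    rw [← hq']
    simp only [Real.sqrt_sq hsq.le]
    field_simp
    ring
  -- step 2 : translation
  have shift : ∫ x in Set.Ioi (0:ℝ), Real.exp (-(Real.sqrt q * x + p / Real.sqrt q) ^ 2 / 2)
      = ∫ y in Set.Ioi (p / q), Real.exp (-(Real.sqrt q * y) ^ 2 / 2) := by
    have hemb := (MeasurableEquiv.addRight (p / q)).measurableEmbedding
    have hmp := (measurePreserving_add_right (volume : Measure ℝ) (p / q)).setIntegral_preimage_emb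
      hemb (fun y => Real.exp (-(Real.sqrt q * y) ^ 2 / 2)) (Set.Ioi (p / q))
    have hpre : (fun x : ℝ => x + p / q) ⁻¹' Set.Ioi (p / q) = Set.Ioi 0 := by
      ext x; simp [Set.mem_Ioi]
    rw [← hpre]
    refine Eq.trans (setIntegral_congr_fun (by rw [hpre]; exact measurableSet_Ioi) ?_) hmp
    intro x _
    dsimp only
    congr 2
    rw [← hq']
    simp only [Real.sqrt_sq hsq.le]
    field_simp
  -- step 3 : scaling
  have scale : ∫ y in Set.Ioi (p / q), Real.exp (-(Real.sqrt q * y) ^ 2 / 2)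
      = (Real.sqrt q)⁻¹ * ∫ v in Set.Ioi (p / Real.sqrt q), Real.exp (-v ^ 2 / 2) := by
    have harg : Real.sqrt q * (p / q) = p / Real.sqrt q := by
      rw [← hq']; simp only [Real.sqrt_sq hsq.le]; field_simp
    have h := integral_comp_mul_left_Ioi (fun v => Real.exp (-v ^ 2 / 2)) (p / q) hsq
    rw [harg] at h
    simpa [smul_eq_mul] using h
  -- step 4 : total mass
  have hint : Integrable (fun v : ℝ => Real.exp (-v ^ 2 / 2)) := by
    have h := integrable_exp_neg_mul_sq (by norm_num : (0:ℝ) < 1/2)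
    apply h.congr
    filter_upwards with v
    congr 1
    ring
  have htot : ∫ v : ℝ, Real.exp (-v ^ 2 / 2) = Real.sqrt (2 * Real.pi) := by
    have h := integral_gaussian (1/2)
    rw [show Real.pi / (1/2) = 2 * Real.pi by ring] at h
    rw [← h]
    apply integral_congr_ae
    filter_upwards with v
    congr 1
    ring
  have hsplit : (∫ v in Set.Iic (p / Real.sqrt q), Real.exp (-v ^ 2 / 2))
      + (∫ v in Set.Ioi (p / Real.sqrt q), Real.exp (-v ^ 2 / 2)) = Real.sqrt (2 * Real.pi) := by
    rw [← htot, ← integral_add_compl measurableSet_Iic hint, Set.compl_Iic]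
  have hΦp := hΦ (p / Real.sqrt q)
  have hsqrtdiv : Real.sqrt (2 * Real.pi / q) = Real.sqrt (2 * Real.pi) / Real.sqrt q :=
    Real.sqrt_div (by positivity) q
  rw [key, shift, scale, hΦp, hsqrtdiv]
  have hIoi : (∫ v in Set.Ioi (p / Real.sqrt q), Real.exp (-v ^ 2 / 2))
      = Real.sqrt (2 * Real.pi) - ∫ v in Set.Iic (p / Real.sqrt q), Real.exp (-v ^ 2 / 2) := by
    linarith
  rw [hIoi]
  field_simp

/-- For `q > 0`, a nonnegative integer `k`, and real `p`,
`∫_0^∞ x^k e^{-px - qx²/2} dx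
  = (-1)^k √(2π/q) · D^k_p [(1 - Φ(p/√q)) e^{p²/(2q)}]`,
where `Φ` is the standard normal cdf and `D^k_p` is the `k`-th derivative in
`p`. -/
theorem integral_pow_mul_exp_eq_iteratedDeriv_gaussian
    (q : ℝ) (hq : 0 < q) (k : ℕ) (p : ℝ)
    (Φ : ℝ → ℝ)
    (hΦ : ∀ x, Φ x = (1 / Real.sqrt (2 * Real.pi)) * ∫ v in Set.Iic x, Real.exp (-v ^ 2 / 2)) :
    ∫ x in Set.Ioi (0 : ℝ), x ^ k * Real.exp (-(p * x) - q * x ^ 2 / 2)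
      = (-1 : ℝ) ^ k * Real.sqrt (2 * Real.pi / q) *
          iteratedDeriv k
            (fun s => (1 - Φ (s / Real.sqrt q)) * Real.exp (s ^ 2 / (2 * q))) p := by
  have hne : Real.sqrt (2 * Real.pi / q) ≠ 0 := (Real.sqrt_pos.mpr (by positivity)).ne'
  rw [aux_iter q hq (Real.sqrt (2 * Real.pi / q))⁻¹ _
      (fun s => aux_base q hq s Φ hΦ) k p]
  rw [show (-1 : ℝ) ^ k * Real.sqrt (2 * Real.pi / q) *
      ((Real.sqrt (2 * Real.pi / q))⁻¹ *
        ∫ x in Set.Ioi (0:ℝ), (-x) ^ k * Real.exp (-(p * x) - q * x ^ 2 / 2))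
      = (-1 : ℝ) ^ k * ∫ x in Set.Ioi (0:ℝ), (-x) ^ k * Real.exp (-(p * x) - q * x ^ 2 / 2) by
    field_simp]
  rw [← integral_const_mul]
  apply setIntegral_congr_fun measurableSet_Ioi
  intro x _
  dsimp only
  rw [← mul_assoc, ← mul_pow]
  norm_num
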